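/- Fix a, b, c ∈ ℂ and for d ≥ 0 let S_d = [[a, d], [cd, b]]. Then a, b ∈ W(S_d), and W(S_{d₁}) ⊆ W(S_{d₂}) whenever 0 ≤ d₁ < d₂. -/

import Mathlib

open scoped ComplexConjugate

section Aux

variable {E : Type*} [NormedAddCommGroup E] [InnerProductSpace ℂ E]

lemma aux_inner_toEuclideanCLM (M : Matrix (Fin 2) (Fin 2) ℂ) (x : EuclideanSpace ℂ (Fin 2)) :
    inner (𝕜 := ℂ) x (Matrix.toEuclideanCLM (𝕜 := ℂ) M x) =
      (starRingEnd ℂ) (x 0) * (M 0 0 * x 0 + M 0 1 * x 1)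
      + (starRingEnd ℂ) (x 1) * (M 1 0 * x 0 + M 1 1 * x 1) := by
  have h : ∀ i, Matrix.toEuclideanCLM (𝕜 := ℂ) M x i = M.mulVec (WithLp.equiv _ _ x) i := by
    intro i
    have := Matrix.ofLp_toEuclideanCLM (𝕜 := ℂ) M x
    have h2 := congrFun (congrArg (fun y => (y : Fin 2 → ℂ)) this) i
    simpa [Matrix.toLin'_apply] using h2
  rw [PiLp.inner_apply]
  simp [h, Matrix.mulVec, dotProduct, Fin.sum_univ_two, RCLike.inner_apply]
  ring

end Aux

section Segment

variable {E : Type*} [NormedAddCommGroup E] [InnerProductSpace ℂ E]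
lemma key_zero_one (T : E →L[ℂ] E) (u v : E) (hu : ‖u‖ = 1) (hv : ‖v‖ = 1)
    (hu0 : inner (𝕜 := ℂ) u (T u) = 0) (hv1 : inner (𝕜 := ℂ) v (T v) = 1)
    {t : ℝ} (ht : t ∈ Set.Icc (0:ℝ) 1) :
    ∃ x : E, ‖x‖ = 1 ∧ inner (𝕜 := ℂ) x (T x) = (t : ℂ) := by
  set A : ℂ := inner (𝕜 := ℂ) u (T v) with hA
  set B : ℂ := inner (𝕜 := ℂ) v (T u) with hB
  set δ : ℂ := A - conj B with hδ
  set γ : ℂ := if δ = 0 then 1 else (‖δ‖ : ℂ)⁻¹ * δ with hγ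
  have hγnorm : ‖γ‖ = 1 := by
    rw [hγ]; split_ifs with h
    · simp
    · rw [norm_mul, norm_inv, Complex.norm_real, norm_norm]
      field_simp [h]
  have hγδ : (conj γ * δ).im = 0 := by
    rw [hγ]; split_ifs with h
    · simp [h]
    · rw [map_mul, map_inv₀, Complex.conj_ofReal, mul_assoc,
        Complex.conj_mul']
      rw [← Complex.ofReal_pow, ← Complex.ofReal_inv, ← Complex.ofReal_mul]
      exact Complex.ofReal_im _
  -- the quantity κ := conj γ * A + γ * B is real
  have hκ : (conj γ * A + γ * B).im = 0 := by
    have hsplit : conj γ * A + γ * B = conj γ * δ + (conj (γ * B) + γ * B) := by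
      rw [hδ, map_mul]; ring
    rw [hsplit, Complex.add_im, hγδ, Complex.add_im, Complex.conj_im]
    ring
  have hγ2 : conj γ * γ = 1 := by
    rw [Complex.conj_mul', hγnorm]
    norm_num
  set x : ℝ → E := fun s => ((1 - s : ℝ) : ℂ) • (γ • u) + ((s : ℝ) : ℂ) • v with hx
  have hZ : ∀ s : ℝ, inner (𝕜 := ℂ) (x s) (T (x s)) =
      ((s:ℂ))^2 + (s:ℂ) * (1 - s) * (conj γ * A + γ * B) := by
    intro s
    simp only [hx, map_add, map_smul, inner_add_left, inner_add_right,
      inner_smul_left, inner_smul_right, Complex.conj_ofReal]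
    rw [hu0, hv1, ← hA, ← hB]
    push_cast
    ring
  have hxne : ∀ s ∈ Set.Icc (0:ℝ) 1, x s ≠ 0 := by
    intro s hs h0
    have h1 : ((1 - s : ℝ) : ℂ) • (γ • u) = -(((s : ℝ) : ℂ) • v) :=
      eq_neg_of_add_eq_zero_left h0
    have hn : 1 - s = s := by
      have h2 := congrArg norm h1
      rw [norm_neg, norm_smul, norm_smul, norm_smul, hγnorm, hu, hv, Complex.norm_real,
        Complex.norm_real, Real.norm_eq_abs, Real.norm_eq_abs,
        abs_of_nonneg (sub_nonneg.2 hs.2), abs_of_nonneg hs.1] at h2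
      simpa using h2
    have hs2 : s = 1/2 := by linarith
    have hvu : v = -(γ • u) := by
      rw [hs2] at h1
      have h3 : (((1:ℝ)/2 : ℝ) : ℂ) • (γ • u) = (((1:ℝ)/2 : ℝ) : ℂ) • (-v) := by
        rw [smul_neg]; convert h1 using 3 <;> norm_num
      have h4 := smul_right_injective E (by norm_num : (((1:ℝ)/2 : ℝ) : ℂ) ≠ 0) h3
      rw [h4]; simp
    rw [hvu] at hv1
    simp only [map_neg, inner_neg_neg, map_smul, inner_smul_left, inner_smul_right, hu0] at hv1
    simp at hv1
  set g : ℝ → ℝ := fun s => (inner (𝕜 := ℂ) (x s) (T (x s))).re / ‖x s‖ ^ 2 with hg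
  have hxc : Continuous x := by
    apply Continuous.add
    · exact (Complex.continuous_ofReal.comp (continuous_const.sub continuous_id)).smul
        continuous_const
    · exact Complex.continuous_ofReal.smul continuous_const
  have hcont : ContinuousOn g (Set.Icc (0:ℝ) 1) := by
    apply ContinuousOn.div
    · exact (Complex.continuous_re.comp (hxc.inner (T.continuous.comp hxc))).continuousOn
    · exact ((hxc.norm.pow 2)).continuousOn
    · intro s hs
      exact pow_ne_zero 2 (norm_ne_zero_iff.2 (hxne s hs))
  have hx0 : x 0 = γ • u := by simp [hx]
  have hx1 : x 1 = v := by simp [hx]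
  have hg0 : g 0 = 0 := by
    simp only [hg]
    rw [hZ 0]
    norm_num
  have hg1 : g 1 = 1 := by
    simp only [hg]
    rw [hZ 1, hx1, hv]
    norm_num
  have hmem : t ∈ Set.Icc (g 0) (g 1) := by rw [hg0, hg1]; exact ht
  obtain ⟨s0, hs0, hgs0⟩ := intermediate_value_Icc (by norm_num : (0:ℝ) ≤ 1) hcont hmem
  set n : ℝ := ‖x s0‖ with hnn
  have hn0 : n ≠ 0 := norm_ne_zero_iff.2 (hxne s0 hs0)
  have hZim : (inner (𝕜 := ℂ) (x s0) (T (x s0))).im = 0 := by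
    rw [hZ s0]
    have h1 : ((s0:ℂ))^2 + (s0:ℂ) * (1 - (s0:ℂ)) * ((starRingEnd ℂ) γ * A + γ * B)
        = ((s0^2 : ℝ) : ℂ) + ((s0 * (1 - s0) : ℝ) : ℂ) * ((starRingEnd ℂ) γ * A + γ * B) := by
      push_cast; ring
    rw [h1, Complex.add_im, Complex.ofReal_im, Complex.mul_im, Complex.ofReal_im,
      Complex.ofReal_re, hκ]
    ring
  have hZre : (inner (𝕜 := ℂ) (x s0) (T (x s0))).re = t * n ^ 2 := by
    have : (inner (𝕜 := ℂ) (x s0) (T (x s0))).re / n ^ 2 = t := hgs0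
    field_simp at this
    linarith [this]
  have hZeq : inner (𝕜 := ℂ) (x s0) (T (x s0)) = ((t * n ^ 2 : ℝ) : ℂ) := by
    apply Complex.ext
    · rw [hZre, Complex.ofReal_re]
    · rw [hZim, Complex.ofReal_im]
  refine ⟨((n⁻¹ : ℝ) : ℂ) • x s0, ?_, ?_⟩
  · rw [norm_smul, Complex.norm_real, norm_inv, Real.norm_eq_abs, abs_of_nonneg (norm_nonneg _)]
    field_simp
    exact div_self hn0
  · rw [map_smul, inner_smul_left, inner_smul_right, Complex.conj_ofReal, hZeq]
    have hn0' : (n:ℂ) ≠ 0 := Complex.ofReal_ne_zero.2 hn0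
    push_cast
    field_simp

lemma segment_mem' (T : E →L[ℂ] E) (p q : ℂ)
    (hp : ∃ x : E, ‖x‖ = 1 ∧ inner (𝕜 := ℂ) x (T x) = p)
    (hq : ∃ x : E, ‖x‖ = 1 ∧ inner (𝕜 := ℂ) x (T x) = q)
    {t : ℝ} (ht : t ∈ Set.Icc (0:ℝ) 1)
    (key : ∀ (T : E →L[ℂ] E) (u v : E), ‖u‖ = 1 → ‖v‖ = 1 →
      inner (𝕜 := ℂ) u (T u) = 0 → inner (𝕜 := ℂ) v (T v) = 1 →
      ∀ {t : ℝ}, t ∈ Set.Icc (0:ℝ) 1 → ∃ x : E, ‖x‖ = 1 ∧ inner (𝕜 := ℂ) x (T x) = (t : ℂ)) :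
    ∃ x : E, ‖x‖ = 1 ∧ inner (𝕜 := ℂ) x (T x) = q + (t : ℂ) * (p - q) := by
  by_cases hpq : p = q
  · obtain ⟨x, hx, hxq⟩ := hq
    exact ⟨x, hx, by rw [hxq, hpq]; ring⟩
  · have hne : p - q ≠ 0 := sub_ne_zero.2 hpq
    set T' : E →L[ℂ] E := (p - q)⁻¹ • (T - q • ContinuousLinearMap.id ℂ E) with hT'
    have hval : ∀ y : E, ‖y‖ = 1 → inner (𝕜 := ℂ) y (T' y) = (p - q)⁻¹ * (inner (𝕜 := ℂ) y (T y) - q) := by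
      intro y hy
      rw [hT']
      simp only [ContinuousLinearMap.smul_apply, ContinuousLinearMap.sub_apply,
        ContinuousLinearMap.smul_apply, ContinuousLinearMap.id_apply,
        inner_smul_right, inner_sub_right]
      rw [inner_self_eq_norm_sq_to_K, hy]
      norm_num
    obtain ⟨u, hu, huq⟩ := hq
    obtain ⟨v, hv, hvp⟩ := hp
    have hu0 : inner (𝕜 := ℂ) u (T' u) = 0 := by rw [hval u hu, huq]; ring
    have hv1 : inner (𝕜 := ℂ) v (T' v) = 1 := by
      rw [hval v hv, hvp]
      field_simp
    obtain ⟨x, hx, hxt⟩ := key T' u v hu hv hu0 hv1 ht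
    refine ⟨x, hx, ?_⟩
    have := hval x hx
    rw [hxt] at this
    have h2 : inner (𝕜 := ℂ) x (T x) - q = (t : ℂ) * (p - q) := by
      field_simp at this
      linear_combination -this
    linear_combination h2

end Segment


/-- The numerical range of a `2 × 2` complex matrix. -/
noncomputable def numRange (M : Matrix (Fin 2) (Fin 2) ℂ) : Set ℂ :=
  {z | ∃ x : EuclideanSpace ℂ (Fin 2), ‖x‖ = 1 ∧
    z = inner (𝕜 := ℂ) x (Matrix.toEuclideanCLM (𝕜 := ℂ) M x)}

theorem stmt_10 (a b c : ℂ) (S : ℝ → Matrix (Fin 2) (Fin 2) ℂ)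
    (hS : ∀ d : ℝ, S d = !![a, (d : ℂ); c * d, b]) :
    (∀ d : ℝ, 0 ≤ d → a ∈ numRange (S d) ∧ b ∈ numRange (S d)) ∧
    (∀ d₁ d₂ : ℝ, 0 ≤ d₁ → d₁ < d₂ → numRange (S d₁) ⊆ numRange (S d₂)) := by
  constructor
  · intro d _
    constructor
    · refine ⟨EuclideanSpace.single 0 1, ?_, ?_⟩
      · simp [EuclideanSpace.norm_single]
      · rw [aux_inner_toEuclideanCLM, hS d]
        simp [EuclideanSpace.single_apply]
    · refine ⟨EuclideanSpace.single 1 1, ?_, ?_⟩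
      · simp [EuclideanSpace.norm_single]
      · rw [aux_inner_toEuclideanCLM, hS d]
        simp [EuclideanSpace.single_apply]
  · intro d₁ d₂ hd1 hlt z hz
    obtain ⟨x, hx, hzx⟩ := hz
    have hd2 : (0:ℝ) < d₂ := lt_of_le_of_lt hd1 hlt
    have hd2ne : (d₂ : ℂ) ≠ 0 := by
      exact_mod_cast Complex.ofReal_ne_zero.2 (ne_of_gt hd2)
    set v : EuclideanSpace ℂ (Fin 2) := (WithLp.equiv 2 (Fin 2 → ℂ)).symm ![x 0, -x 1] with hvdef
    have hv0 : v 0 = x 0 := by simp [hvdef, PiLp.toLp_apply]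
    have hv1 : v 1 = -x 1 := by simp [hvdef, PiLp.toLp_apply]
    have hvnorm : ‖v‖ = 1 := by
      rw [EuclideanSpace.norm_eq] at hx ⊢
      rw [Fin.sum_univ_two, hv0, hv1, norm_neg]
      rw [Fin.sum_univ_two] at hx
      exact hx
    set p : ℂ := (starRingEnd ℂ) (x 0) * (a * x 0 + (d₂:ℂ) * x 1)
      + (starRingEnd ℂ) (x 1) * (c * (d₂:ℂ) * x 0 + b * x 1) with hpdef
    set q : ℂ := (starRingEnd ℂ) (x 0) * (a * x 0 + (d₂:ℂ) * (-x 1))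
      + (starRingEnd ℂ) (-x 1) * (c * (d₂:ℂ) * x 0 + b * (-x 1)) with hqdef
    have hp : inner (𝕜 := ℂ) x (Matrix.toEuclideanCLM (𝕜 := ℂ) (S d₂) x) = p := by
      rw [aux_inner_toEuclideanCLM, hS d₂]
      simp [hpdef]
    have hq : inner (𝕜 := ℂ) v (Matrix.toEuclideanCLM (𝕜 := ℂ) (S d₂) v) = q := by
      rw [aux_inner_toEuclideanCLM, hS d₂]
      simp [hqdef, hv0, hv1]
    have hzx' : z = (starRingEnd ℂ) (x 0) * (a * x 0 + (d₁:ℂ) * x 1)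
        + (starRingEnd ℂ) (x 1) * (c * (d₁:ℂ) * x 0 + b * x 1) := by
      rw [hzx, aux_inner_toEuclideanCLM, hS d₁]
      simp
    set t : ℝ := (1 + d₁ / d₂) / 2 with htdef
    have ht : t ∈ Set.Icc (0:ℝ) 1 := by
      constructor
      · have : 0 ≤ d₁ / d₂ := div_nonneg hd1 (le_of_lt hd2)
        rw [htdef]; linarith
      · have : d₁ / d₂ < 1 := (div_lt_one hd2).2 hlt
        rw [htdef]; linarith
    obtain ⟨y, hy, hyval⟩ := segment_mem' (Matrix.toEuclideanCLM (𝕜 := ℂ) (S d₂)) p q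
      ⟨x, hx, hp⟩ ⟨v, hvnorm, hq⟩ ht
      (fun T u v hu hv hu0 hv1 _ ht' => key_zero_one T u v hu hv hu0 hv1 ht')
    refine ⟨y, hy, ?_⟩
    rw [hyval, hzx', hpdef, hqdef]
    have htc : (t : ℂ) = (1 + (d₁:ℂ) / (d₂:ℂ)) / 2 := by
      rw [htdef]; push_cast; ring
    rw [htc]
    field_simp
    simp only [map_neg]
    ring
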